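/- Let R be a dominant region of the k-Catalan arrangement of Φ and let 𝓘 = θ(R) be its geometric chain of ideals. If the hyperplane H_α^r = {x : ⟨x,α⟩ = r} is a ceiling of R (a wall of R not through the origin with R on the origin's side), then α is a rank r indecomposable element of 𝓘. -/

import Mathlib

open scoped Pointwise RealInnerProductSpace

/-- A crystallographic root system together with a choice of simple system. -/
structure RootSystemData (V : Type*) [NormedAddCommGroup V] [InnerProductSpace ℝ V] where
  Φ : Set V
  S : Set V
  finite : Φ.Finite
  ne_zero : ∀ α ∈ Φ, α ≠ 0
  reflect_mem : ∀ α ∈ Φ, ∀ β ∈ Φ, β - (2 * (inner ℝ β α : ℝ) / (inner ℝ α α : ℝ)) • α ∈ Φ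
  crystal : ∀ α ∈ Φ, ∀ β ∈ Φ, ∃ m : ℤ, 2 * (inner ℝ β α : ℝ) / (inner ℝ α α : ℝ) = (m : ℝ)
  reduced : ∀ α ∈ Φ, ∀ t : ℝ, t • α ∈ Φ → t = 1 ∨ t = -1
  S_sub : S ⊆ Φ
  S_indep : LinearIndependent ℝ ((↑) : S → V)
  decomp : ∀ α ∈ Φ, α ∈ AddSubmonoid.closure S ∨ -α ∈ AddSubmonoid.closure S

namespace RootSystemData

variable {V : Type*} [NormedAddCommGroup V] [InnerProductSpace ℝ V] (D : RootSystemData V)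

/-- The positive roots. -/
def pos : Set V := {α ∈ D.Φ | α ∈ AddSubmonoid.closure D.S}

/-- The root poset order: `α ≤ β` iff `β - α` is a nonnegative integer combination
of simple roots. -/
def rle (α β : V) : Prop := β - α ∈ AddSubmonoid.closure D.S

/-- An (order) ideal of the root poset. -/
def IsIdeal (I : Set V) : Prop :=
  I ⊆ D.pos ∧ ∀ α ∈ I, ∀ β ∈ D.pos, D.rle β α → β ∈ I

/-- The order filters complementary to a chain of ideals, with the conventions
`J 0 = Φ⁺` (as `I 0 = ∅`) and `J i = J k` for `i > k`. -/
def Jf (k : ℕ) (I : ℕ → Set V) (i : ℕ) : Set V := D.pos \ I (min i k)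

/-- A geometric chain of `k` ideals in the root poset. -/
structure IsGeomChain (k : ℕ) (I : ℕ → Set V) : Prop where
  zero : I 0 = ∅
  ideal : ∀ i, 1 ≤ i → i ≤ k → D.IsIdeal (I i)
  mono : ∀ i j, i ≤ j → j ≤ k → I i ⊆ I j
  geomI : ∀ i j, i + j ≤ k → (I i + I j) ∩ D.pos ⊆ I (i + j)
  geomJ : ∀ i j, (D.Jf k I i + D.Jf k I j) ∩ D.pos ⊆ D.Jf k I (i + j)

/-- A chain of ideals is positive if `S ⊆ I k`. -/
def IsPositiveChain (k : ℕ) (I : ℕ → Set V) : Prop := D.S ⊆ I k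

/-- The set of values `r₁ + … + r_m` over all expressions `α = α₁ + … + α_m` with
`α_i ∈ I (r i)` and `1 ≤ r i ≤ k`; its least element (when it exists) is `r_α(𝓘)`. -/
def rVals (_D : RootSystemData V) (k : ℕ) (I : ℕ → Set V) (α : V) : Set ℕ :=
  {N | ∃ m : ℕ, ∃ a : Fin m → V, ∃ r : Fin m → ℕ,
    (∀ i, 1 ≤ r i ∧ r i ≤ k ∧ a i ∈ I (r i)) ∧ (∑ i, a i) = α ∧ (∑ i, r i) = N}

/-- The extension `𝓘̲` of a geometric chain of `k` ideals to a chain of `k+1` ideals,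
with `I̲_{k+1} = ⋃_{i+j=k+1} ((I_i + I_j) ∩ Φ⁺) ∪ I_k ∪ S`. -/
def Ibar (k : ℕ) (I : ℕ → Set V) : ℕ → Set V := fun i =>
  if i ≤ k then I i
  else (⋃ (p : ℕ × ℕ) (_ : p.1 + p.2 = k + 1), (I p.1 + I p.2) ∩ D.pos) ∪ I k ∪ D.S

/-- `α` is a rank `r` indecomposable element of the chain of ideals `I`. -/
def IsIndec (k : ℕ) (I : ℕ → Set V) (r : ℕ) (α : V) : Prop :=
  α ∈ I r ∧ IsLeast (D.rVals k I α) r ∧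
  (∀ i j, i + j = r → α ∉ I i + I j) ∧
  (∀ β ∈ D.pos, ∀ t, t ≤ k → IsLeast (D.rVals k I (α + β)) t → β ∈ I (t - r))

/-- The complement of the `k`-Catalan arrangement of `Φ`. -/
def catComp (k : ℕ) : Set V :=
  {x | ∀ α ∈ D.Φ, ∀ r : ℕ, r ≤ k → (inner ℝ x α : ℝ) ≠ (r : ℝ)}

/-- A region of the `k`-Catalan arrangement: a connected component of the complement. -/
def IsRegion (k : ℕ) (R : Set V) : Prop :=
  ∃ x ∈ D.catComp k, R = connectedComponentIn (D.catComp k) x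

/-- A dominant region of the `k`-Catalan arrangement. -/
def IsDomRegion (k : ℕ) (R : Set V) : Prop :=
  D.IsRegion k R ∧ ∀ x ∈ R, ∀ α ∈ D.pos, 0 < (inner ℝ x α : ℝ)

/-- The complement of the affine Coxeter arrangement of `Φ`. -/
def affComp : Set V := {x | ∀ α ∈ D.Φ, ∀ r : ℤ, (inner ℝ x α : ℝ) ≠ (r : ℝ)}

/-- An alcove: a connected component of the complement of the affine Coxeter arrangement. -/
def IsAlcove (A : Set V) : Prop :=
  ∃ x ∈ D.affComp, A = connectedComponentIn D.affComp x

/-- The hyperplane `H_α^r` supports a facet of `R`. -/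
def IsWall (_D : RootSystemData V) (R : Set V) (α : V) (r : ℝ) : Prop :=
  ∃ x, (inner ℝ x α : ℝ) = r ∧ ∃ ε > 0, ∀ y, (inner ℝ y α : ℝ) = r → dist y x < ε → y ∈ closure R

/-- `H_α^r` is a ceiling of the dominant region (or alcove) `R`: a wall not through
the origin with `R` on the same side as the origin. -/
def IsCeiling (R : Set V) (α : V) (r : ℝ) : Prop :=
  D.IsWall R α r ∧ 0 < r ∧ ∀ x ∈ R, (inner ℝ x α : ℝ) < r

/-- `H_α^r` is a floor of the dominant region (or alcove) `R`: a wall not through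
the origin separating `R` from the origin. -/
def IsFloor (R : Set V) (α : V) (r : ℝ) : Prop :=
  D.IsWall R α r ∧ 0 < r ∧ ∀ x ∈ R, r < (inner ℝ x α : ℝ)

/-- The chain of ideals `θ(R)` associated to a dominant region `R`. -/
def theta (R : Set V) : ℕ → Set V := fun i =>
  {α ∈ D.pos | ∀ x ∈ R, (inner ℝ x α : ℝ) < (i : ℝ)}

/-- `B` is the maximal alcove of the (bounded) region corresponding to the positive chain
of ideals `I`, i.e. the alcove with `r(B,α) = r_α(𝓘)` for all positive roots `α`. -/
def IsMaxAlcoveOf (k : ℕ) (I : ℕ → Set V) (B : Set V) : Prop :=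
  D.IsAlcove B ∧ ∀ α ∈ D.pos, ∃ r : ℕ, IsLeast (D.rVals k I α) r ∧
    ∀ x ∈ B, ((r : ℝ) - 1 < (inner ℝ x α : ℝ) ∧ (inner ℝ x α : ℝ) < (r : ℝ))

/-- The root system `Φ` is irreducible. -/
def Irred : Prop :=
  ∀ Φ₁ Φ₂ : Set V, Φ₁ ∪ Φ₂ = D.Φ → (∀ a ∈ Φ₁, ∀ b ∈ Φ₂, (inner ℝ a b : ℝ) = 0) →
    Φ₁ = ∅ ∨ Φ₂ = ∅

end RootSystemData


section Aux

variable {V : Type*} [NormedAddCommGroup V] [InnerProductSpace ℝ V]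

private lemma aux_closure_le {R : Set V} {β : V} {c : ℝ}
    (h : ∀ x ∈ R, (inner ℝ x β : ℝ) ≤ c) : ∀ y ∈ closure R, (inner ℝ y β : ℝ) ≤ c := by
  have hcl : IsClosed {x : V | (inner ℝ x β : ℝ) ≤ c} :=
    isClosed_le (continuous_id.inner continuous_const) continuous_const
  exact fun y hy => closure_minimal h hcl hy

private lemma aux_closure_ge {R : Set V} {β : V} {c : ℝ}
    (h : ∀ x ∈ R, c ≤ (inner ℝ x β : ℝ)) : ∀ y ∈ closure R, c ≤ (inner ℝ y β : ℝ) := by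
  intro y hy
  have := aux_closure_le (R := R) (β := -β) (c := -c)
    (fun x hx => by rw [inner_neg_right]; linarith [h x hx]) y hy
  rw [inner_neg_right] at this; linarith

private lemma aux_perp {α β x₀ : V} {r ε : ℝ} (hαα : (inner ℝ α α : ℝ) ≠ 0) (hε : 0 < ε)
    (hx₀ : (inner ℝ x₀ α : ℝ) = r)
    (hW : ∀ y : V, (inner ℝ y α : ℝ) = r → dist y x₀ < ε →
      (inner ℝ y β : ℝ) ≤ (inner ℝ x₀ β : ℝ)) :
    ∃ c : ℝ, β = c • α := by
  set t : ℝ := (inner ℝ β α : ℝ) / (inner ℝ α α : ℝ) with ht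
  refine ⟨t, ?_⟩
  by_contra hne
  set w : V := β - t • α with hw
  have hwne : w ≠ 0 := fun h => hne (by rw [hw, sub_eq_zero] at h; exact h)
  have hwα : (inner ℝ w α : ℝ) = 0 := by
    rw [hw, inner_sub_left, real_inner_smul_left, ht]
    field_simp
    ring
  have hwβ : (inner ℝ w β : ℝ) = ‖w‖ ^ 2 := by
    have hβ' : β = w + t • α := by rw [hw]; abel
    rw [hβ', inner_add_right, real_inner_smul_right, hwα, real_inner_self_eq_norm_sq]
    ring
  have hwpos : 0 < ‖w‖ := norm_pos_iff.mpr hwne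
  set δ : ℝ := ε / (2 * ‖w‖) with hδ
  have hδpos : 0 < δ := by positivity
  have hy : (inner ℝ (x₀ + δ • w) α : ℝ) = r := by
    rw [inner_add_left, real_inner_smul_left, hwα, hx₀]; ring
  have hd : dist (x₀ + δ • w) x₀ < ε := by
    rw [dist_eq_norm, add_sub_cancel_left, norm_smul, Real.norm_eq_abs, abs_of_pos hδpos]
    rw [hδ, div_mul_eq_mul_div]
    rw [div_lt_iff₀ (by positivity)]
    nlinarith
  have hle := hW _ hy hd
  rw [inner_add_left, real_inner_smul_left, hwβ] at hle
  have hpos2 : 0 < δ * ‖w‖ ^ 2 := by positivity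
  linarith

end Aux

/-- If `H_α^r` is a ceiling of a dominant region `R` of the `k`-Catalan
arrangement, then `α` is a rank `r` indecomposable element of `𝓘 = θ(R)`. -/

theorem statement9 {V : Type*} [NormedAddCommGroup V] [InnerProductSpace ℝ V]
    (D : RootSystemData V) (k : ℕ) (R : Set V) (hR : D.IsDomRegion k R)
    (α : V) (hα : α ∈ D.pos) (r : ℕ) (hr : 1 ≤ r) (hrk : r ≤ k)
    (hc : D.IsCeiling R α (r : ℝ)) :
    D.IsIndec k (D.theta R) r α := by
  obtain ⟨hreg, hdom⟩ := hR
  obtain ⟨⟨x₀, hx₀r, ε, hε, hball⟩, hrpos, hceil⟩ := hc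
  have hx₀cl : x₀ ∈ closure R := hball x₀ hx₀r (by simpa using hε)
  obtain ⟨z, hz, hRdef⟩ := hreg
  have hzR : z ∈ R := by rw [hRdef]; exact mem_connectedComponentIn hz
  have hRsub : R ⊆ D.catComp k := by rw [hRdef]; exact connectedComponentIn_subset _ _
  have hRpc : IsPreconnected R := by rw [hRdef]; exact isPreconnected_connectedComponentIn
  have hαΦ : α ∈ D.Φ := hα.1
  have hαα : (inner ℝ α α : ℝ) ≠ 0 := fun h => D.ne_zero α hαΦ (inner_self_eq_zero.mp h)
  have hmemθ : α ∈ D.theta R r := ⟨hα, fun x hx => hceil x hx⟩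
  have hθcl : ∀ (γ : V) (i : ℕ), γ ∈ D.theta R i → ∀ y ∈ closure R, (inner ℝ y γ : ℝ) ≤ i :=
    fun γ i hγ => aux_closure_le (fun x hx => le_of_lt (hγ.2 x hx))
  have hdomcl : ∀ γ ∈ D.pos, ∀ y ∈ closure R, 0 ≤ (inner ℝ y γ : ℝ) :=
    fun γ hγ => aux_closure_ge (fun x hx => le_of_lt (hdom x hx γ hγ))
  have hrv : ∀ (v : V) (N : ℕ), N ∈ D.rVals k (D.theta R) v →
      ∀ x ∈ R, (inner ℝ x v : ℝ) ≤ N := by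
    intro v N hN x hx
    obtain ⟨m, a, rv, hprops, hsum, hNsum⟩ := hN
    calc (inner ℝ x v : ℝ) = ∑ i, (inner ℝ x (a i) : ℝ) := by rw [← hsum, inner_sum]
      _ ≤ ∑ i, (rv i : ℝ) :=
        Finset.sum_le_sum (fun i _ => le_of_lt ((hprops i).2.2.2 x hx))
      _ = N := by rw [← hNsum]; push_cast; ring
  refine ⟨hmemθ, ⟨⟨1, fun _ => α, fun _ => r, fun i => ⟨hr, hrk, hmemθ⟩, by simp, by simp⟩, ?_⟩,
    ?_, ?_⟩
  · -- lower bound for rVals α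
    intro N hN
    have h1 : (inner ℝ x₀ α : ℝ) ≤ N := aux_closure_le (hrv α N hN) x₀ hx₀cl
    rw [hx₀r] at h1
    exact_mod_cast h1
  · -- indecomposability
    intro i j hij hmem'
    obtain ⟨β, hβ, γ, hγ, hβγ⟩ := Set.mem_add.mp hmem'
    have hβx₀ := hθcl β i hβ x₀ hx₀cl
    have hγx₀ := hθcl γ j hγ x₀ hx₀cl
    have hsumx₀ : (inner ℝ x₀ β : ℝ) + (inner ℝ x₀ γ : ℝ) = r := by
      have : (inner ℝ x₀ (β + γ) : ℝ) = r := by rw [hβγ, hx₀r]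
      rw [inner_add_right] at this
      linarith
    have hij' : (i : ℝ) + j = r := by exact_mod_cast congrArg (Nat.cast : ℕ → ℝ) hij
    have hβeq : (inner ℝ x₀ β : ℝ) = i := by linarith
    have hW : ∀ y : V, (inner ℝ y α : ℝ) = r → dist y x₀ < ε →
        (inner ℝ y β : ℝ) ≤ (inner ℝ x₀ β : ℝ) := by
      intro y hy hd
      rw [hβeq]
      exact hθcl β i hβ y (hball y hy hd)
    obtain ⟨c, hc⟩ := aux_perp hαα hε hx₀r hW
    have hβΦ : β ∈ D.Φ := hβ.1.1
    rcases D.reduced α hαΦ c (hc ▸ hβΦ) with h1 | h1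
    · rw [h1, one_smul] at hc
      have hγ0 : γ = 0 := by
        rw [hc] at hβγ
        rwa [add_eq_left] at hβγ
      exact D.ne_zero γ hγ.1.1 hγ0
    · have h2 := hdom z hzR β hβ.1
      have h3 := hdom z hzR α hα
      rw [hc, h1, real_inner_smul_right] at h2
      linarith
  · -- filter condition
    intro β hβ t ht hL
    have hβΦ : β ∈ D.Φ := hβ.1
    have htub : ∀ x ∈ R, (inner ℝ x (α + β) : ℝ) ≤ t := hrv _ t hL.1
    have hx₀αβ : (inner ℝ x₀ (α + β) : ℝ) ≤ t := aux_closure_le htub x₀ hx₀cl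
    have hx₀β : 0 ≤ (inner ℝ x₀ β : ℝ) := hdomcl β hβ x₀ hx₀cl
    have hsplit : (inner ℝ x₀ (α + β) : ℝ) = r + inner ℝ x₀ β := by
      rw [inner_add_right, hx₀r]
    have hrt : r ≤ t := by
      have : (r : ℝ) ≤ t := by linarith
      exact_mod_cast this
    have hscast : ((t - r : ℕ) : ℝ) = (t : ℝ) - r := by
      rw [Nat.cast_sub hrt]
    refine ⟨hβ, ?_⟩
    intro x hx
    by_contra hge
    push_neg at hge
    have hne0 : ∀ x' ∈ R, (inner ℝ x' β : ℝ) ≠ ((t - r : ℕ) : ℝ) := fun x' hx' =>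
      hRsub hx' β hβΦ (t - r) (by omega)
    have hxgt : ((t - r : ℕ) : ℝ) < inner ℝ x β :=
      lt_of_le_of_ne hge (fun h => hne0 x hx h.symm)
    have hall : ∀ x' ∈ R, ((t - r : ℕ) : ℝ) < (inner ℝ x' β : ℝ) := by
      intro x' hx'
      rcases lt_or_gt_of_ne (hne0 x' hx') with hlt | hgt
      · exfalso
        have hcont : ContinuousOn (fun y : V => (inner ℝ y β : ℝ)) R :=
          (continuous_id.inner continuous_const).continuousOn
        obtain ⟨y, hyR, hy⟩ := hRpc.intermediate_value hx' hx hcont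
          ⟨le_of_lt hlt, le_of_lt hxgt⟩
        exact hne0 y hyR hy
      · exact hgt
    have hclge : ∀ y ∈ closure R, ((t - r : ℕ) : ℝ) ≤ inner ℝ y β :=
      aux_closure_ge (fun x' hx' => le_of_lt (hall x' hx'))
    have hx₀βeq : (inner ℝ x₀ β : ℝ) = ((t - r : ℕ) : ℝ) := by
      have h1 := hclge x₀ hx₀cl
      have h2 : (inner ℝ x₀ β : ℝ) ≤ (t : ℝ) - r := by linarith
      linarith [hscast.ge, hscast.le]
    have hW : ∀ y : V, (inner ℝ y α : ℝ) = r → dist y x₀ < ε →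
        (inner ℝ y (-β) : ℝ) ≤ (inner ℝ x₀ (-β) : ℝ) := by
      intro y hy hd
      have hycl := hball y hy hd
      rw [inner_neg_right, inner_neg_right, hx₀βeq]
      linarith [hclge y hycl]
    obtain ⟨c, hc⟩ := aux_perp hαα hε hx₀r hW
    have hβc : β = (-c) • α := by rw [neg_smul, ← hc, neg_neg]
    rcases D.reduced α hαΦ (-c) (hβc ▸ hβΦ) with h1 | h1
    · rw [h1, one_smul] at hβc
      have hsr : ((t - r : ℕ) : ℝ) = r := by rw [← hx₀βeq, hβc, hx₀r]
      have hcx := hceil x hx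
      rw [hβc] at hxgt
      linarith
    · rw [h1] at hβc
      have h2 := hdom x hx β hβ
      have h3 := hdom x hx α hα
      rw [hβc, real_inner_smul_right] at h2
      linarith
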